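/- arXiv:2304.14776 — 2 statements merged into one kernel-verified Lean document; each statement's English description precedes it below -/
import Mathlib

section
/- Let O ∈ ℝ², r > 0, x ∈ ℝ² with x ≠ O, and let γ(s) = O + r·(cos(s/r), sin(s/r)) be the arc-length parametrization of the circle of center O and radius r. If s ≠ s' are two critical points of the function f(s) = ‖x − γ(s)‖ (i.e. f is differentiable at s and s' with f'(s) = f'(s') = 0), then |s − s'| ≥ πr. In particular, f has at most one critical point in any open interval of length at most πr. (This is item (iv) of the geometric Proposition of Section 4: the distance function from a point to a circular arc has at most one critical point in the interior of the arc.) -/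
/-- **Critical points of the distance function to a circle are `πr`-separated.**
Let `γ(s) = O + r·(cos(s/r), sin(s/r))` be the unit-speed parametrization of the
circle of center `O` and radius `r`, let `x ≠ O`, and `f(s) = ‖x - γ(s)‖`. If
`s ≠ s'` are two critical points of `f`, then `|s - s'| ≥ πr`; in particular `f`
has at most one critical point in any open interval of length at most `πr`. -/
theorem circle_distance_critical_points_separated
    (O : EuclideanSpace ℝ (Fin 2)) (r : ℝ) (hr : 0 < r)
    (x : EuclideanSpace ℝ (Fin 2)) (hx : x ≠ O)
    (γ : ℝ → EuclideanSpace ℝ (Fin 2))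
    (hγ : ∀ s, γ s = O + r •
      (WithLp.equiv 2 (Fin 2 → ℝ)).symm ![Real.cos (s / r), Real.sin (s / r)])
    (f : ℝ → ℝ) (hf : ∀ s, f s = ‖x - γ s‖)
    (s s' : ℝ) (hne : s ≠ s')
    (hds : DifferentiableAt ℝ f s) (hds0 : deriv f s = 0)
    (hds' : DifferentiableAt ℝ f s') (hds'0 : deriv f s' = 0) :
    Real.pi * r ≤ |s - s'| := by
  have hrne : r ≠ 0 := ne_of_gt hr
  set a : ℝ := (x - O) 0 with ha
  set b : ℝ := (x - O) 1 with hb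
  -- explicit formula for f u ^ 2
  have hfe : ∀ u, f u ^ 2 =
      (a - r * Real.cos (u / r)) ^ 2 + (b - r * Real.sin (u / r)) ^ 2 := by
    intro u
    rw [hf, hγ, EuclideanSpace.norm_eq]
    rw [Real.sq_sqrt (by positivity)]
    rw [Fin.sum_univ_two]
    simp [ha, hb, sub_sub]
  -- at any critical point t, a*sin(t/r) = b*cos(t/r)
  have key : ∀ t : ℝ, DifferentiableAt ℝ f t → deriv f t = 0 →
      a * Real.sin (t / r) = b * Real.cos (t / r) := by
    intro t hdt hdt0
    have hg : HasDerivAt (fun u => f u ^ 2) 0 t := by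
      have := (hdt.hasDerivAt).pow 2
      rw [hdt0] at this
      simpa [Pi.pow_def] using this
    have h1 : HasDerivAt (fun u : ℝ => u / r) (1 / r) t := by
      simpa using (hasDerivAt_id t).div_const r
    have hc : HasDerivAt (fun u : ℝ => Real.cos (u / r))
        (-Real.sin (t / r) * (1 / r)) t := (Real.hasDerivAt_cos (t / r)).comp (h₂ := Real.cos) t h1
    have hs : HasDerivAt (fun u : ℝ => Real.sin (u / r))
        (Real.cos (t / r) * (1 / r)) t := (Real.hasDerivAt_sin (t / r)).comp (h₂ := Real.sin) t h1
    have hc2 : HasDerivAt (fun u : ℝ => a - r * Real.cos (u / r))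
        (-(r * (-Real.sin (t / r) * (1 / r)))) t := (hc.const_mul r).const_sub a
    have hs2 : HasDerivAt (fun u : ℝ => b - r * Real.sin (u / r))
        (-(r * (Real.cos (t / r) * (1 / r)))) t := (hs.const_mul r).const_sub b
    have hsum : HasDerivAt (fun u : ℝ =>
        (a - r * Real.cos (u / r)) ^ 2 + (b - r * Real.sin (u / r)) ^ 2)
        (2 * (a - r * Real.cos (t / r)) ^ 1 * (-(r * (-Real.sin (t / r) * (1 / r))))
          + 2 * (b - r * Real.sin (t / r)) ^ 1 * (-(r * (Real.cos (t / r) * (1 / r))))) t :=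
      (hc2.pow 2).add (hs2.pow 2)
    have hg' : HasDerivAt (fun u : ℝ =>
        (a - r * Real.cos (u / r)) ^ 2 + (b - r * Real.sin (u / r)) ^ 2) 0 t := by
      have heq : (fun u => f u ^ 2) = fun u : ℝ =>
          (a - r * Real.cos (u / r)) ^ 2 + (b - r * Real.sin (u / r)) ^ 2 :=
        funext hfe
      rwa [heq] at hg
    have h0 := hsum.unique hg'
    have hpy := Real.sin_sq_add_cos_sq (t / r)
    field_simp at h0
    nlinarith [h0, hpy]
  have ha' := key s hds hds0
  have hb' := key s' hds' hds'0
  -- (a, b) ≠ (0, 0)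
  have hab : a ≠ 0 ∨ b ≠ 0 := by
    by_contra h
    push_neg at h
    apply hx
    have : x - O = 0 := by
      ext i
      fin_cases i
      · simpa [ha] using h.1
      · simpa [hb] using h.2
    exact sub_eq_zero.mp this
  -- sin((s-s')/r) = 0
  have hsin : Real.sin (s / r - s' / r) = 0 := by
    have hA : a * Real.sin (s / r - s' / r) = 0 := by
      rw [Real.sin_sub]
      linear_combination Real.cos (s' / r) * ha' - Real.cos (s / r) * hb'
    have hB : b * Real.sin (s / r - s' / r) = 0 := by
      rw [Real.sin_sub]
      linear_combination Real.sin (s' / r) * ha' - Real.sin (s / r) * hb'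
    rcases hab with h | h
    · exact (mul_eq_zero.mp hA).resolve_left h
    · exact (mul_eq_zero.mp hB).resolve_left h
  rw [Real.sin_eq_zero_iff] at hsin
  obtain ⟨n, hn⟩ := hsin
  have hdiff : s - s' = n * Real.pi * r := by
    field_simp at hn
    linarith [hn]
  have hn0 : n ≠ 0 := by
    intro h
    apply hne
    rw [h] at hdiff
    simp at hdiff
    linarith [hdiff]
  have h1n : (1 : ℝ) ≤ |(n : ℝ)| := by
    have : (1 : ℤ) ≤ |n| := Int.one_le_abs hn0
    exact_mod_cast this
  rw [hdiff, abs_mul, abs_mul, abs_of_pos Real.pi_pos, abs_of_pos hr]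
  calc Real.pi * r = 1 * Real.pi * r := by ring
    _ ≤ |(n : ℝ)| * Real.pi * r := by
        apply mul_le_mul_of_nonneg_right _ hr.le
        exact mul_le_mul_of_nonneg_right h1n Real.pi_pos.le
end

section
/- Let K ⊆ ℝ² be a nonempty open convex set, let Γ : ℝ → ℝ² be a C¹ curve parametrized by arc length whose range equals the frontier of K, and let x ∈ ℝ² lie outside the closure of K. Write d_x(s) = ‖x − Γ(s)‖ and let m = inf_{s∈ℝ} d_x(s). Suppose s* ∈ ℝ is a local extremum point of d_x (a point having a neighborhood on which d_x(s*) is the maximal or the minimal value of d_x) with d_x(s*) > m, i.e. s* is not a global minimum point. Then the segment from Γ(s*) toward x initially lies inside K: there exists ε > 0 such that Γ(s*) + τ·(x − Γ(s*))/‖x − Γ(s*)‖ ∈ K for every τ ∈ (0, ε). (This is Lemma 5.1' of the paper: for a point exterior to the convex side, every extremum of the distance function other than the global minimum is approached from the convex side.) -/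
open RealInnerProductSpace

/-- **Lemma 5.1' of the paper.** Let `K ⊆ ℝ²` be nonempty, open and convex, let `Γ`
be a `C¹` unit-speed curve whose range is the frontier of `K`, and let `x` lie
outside the closure of `K`. If `s*` is a local extremum point of the distance
function `d_x(s) = ‖x - Γ(s)‖` which is not a global minimum point (its value
exceeds `m = inf d_x`), then the segment from `Γ(s*)` toward `x` initially lies
inside `K`. -/
theorem convex_side_distance_extremum_approached_from_inside
    (K : Set (EuclideanSpace ℝ (Fin 2))) (hKne : K.Nonempty)
    (hKopen : IsOpen K) (hKconv : Convex ℝ K)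
    (Γ : ℝ → EuclideanSpace ℝ (Fin 2))
    (hC1 : ContDiff ℝ 1 Γ) (hunit : ∀ s, ‖deriv Γ s‖ = 1)
    (hrange : Set.range Γ = frontier K)
    (x : EuclideanSpace ℝ (Fin 2)) (hx : x ∉ closure K)
    (dx : ℝ → ℝ) (hdx : ∀ s, dx s = ‖x - Γ s‖)
    (sstar : ℝ)
    (hext : IsLocalMax dx sstar ∨ IsLocalMin dx sstar)
    (hnotmin : (⨅ s, dx s) < dx sstar) :
    ∃ ε > (0 : ℝ), ∀ τ ∈ Set.Ioo 0 ε,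
      Γ sstar + (τ / ‖x - Γ sstar‖) • (x - Γ sstar) ∈ K := by
  set p : EuclideanSpace ℝ (Fin 2) := Γ sstar with hp
  set u : EuclideanSpace ℝ (Fin 2) := x - p with hu
  have hpfr : p ∈ frontier K := by rw [← hrange]; exact Set.mem_range_self _
  have hpcl : p ∈ closure K := frontier_subset_closure hpfr
  have hu0 : u ≠ 0 := by
    intro h
    apply hx
    have : x = p := by rwa [hu, sub_eq_zero] at h
    rwa [this]
  -- derivative of the squared distance vanishes at sstar
  have hΓd : ∀ s, HasDerivAt Γ (deriv Γ s) s :=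
    fun s => (hC1.differentiable one_ne_zero s).hasDerivAt
  set w : EuclideanSpace ℝ (Fin 2) := deriv Γ sstar with hw
  have hw0 : w ≠ 0 := by
    intro h; have := hunit sstar; rw [← hw, h, norm_zero] at this; norm_num at this
  have hsq := ((hasDerivAt_const sstar x).sub (hΓd sstar)).inner ℝ
      ((hasDerivAt_const sstar x).sub (hΓd sstar))
  simp only [zero_sub, Pi.sub_apply] at hsq
  have hloc : IsLocalMax (fun s => ⟪x - Γ s, x - Γ s⟫) sstar ∨
      IsLocalMin (fun s => ⟪x - Γ s, x - Γ s⟫) sstar := by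
    have hmono : ∀ a b : ℝ, dx a ≤ dx b →
        ⟪x - Γ a, x - Γ a⟫ ≤ ⟪x - Γ b, x - Γ b⟫ := by
      intro a b hab
      rw [real_inner_self_eq_norm_sq, real_inner_self_eq_norm_sq]
      rw [hdx a, hdx b] at hab
      exact pow_le_pow_left₀ (norm_nonneg _) hab 2
    rcases hext with h | h
    · exact Or.inl (h.mono fun s hs => hmono s sstar hs)
    · exact Or.inr (h.mono fun s hs => hmono sstar s hs)
  have hderiv0 : ⟪x - Γ sstar, -deriv Γ sstar⟫ + ⟪-deriv Γ sstar, x - Γ sstar⟫ = 0 := by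
    rcases hloc with h | h
    · have := h.deriv_eq_zero; rwa [hsq.deriv] at this
    · have := h.deriv_eq_zero; rwa [hsq.deriv] at this
  have huw : ⟪w, u⟫ = 0 := by
    have h2 := hderiv0
    rw [inner_neg_left, inner_neg_right,
      real_inner_comm (x - Γ sstar) (deriv Γ sstar)] at h2
    rw [hw, hu, hp, real_inner_comm]
    linarith
  -- main claim: the open segment from p to x meets K
  have key : ∃ t : ℝ, t ∈ Set.Ioo (0:ℝ) 1 ∧ p + t • u ∈ K := by
    by_contra hcon
    push_neg at hcon
    -- the closed segment [p, x] is disjoint from K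
    have hdisj : Disjoint K (segment ℝ p x) := by
      rw [Set.disjoint_right]
      rintro y ⟨a, b, ha, hb, hab, rfl⟩ hyK
      rcases eq_or_lt_of_le hb with hb0 | hbpos
      · have : a = 1 := by linarith
        rw [this, ← hb0] at hyK
        simp only [one_smul, zero_smul, add_zero] at hyK
        exact hpfr.2 (by rwa [hKopen.interior_eq])
      rcases eq_or_lt_of_le ha with ha0 | hapos
      · have : b = 1 := by linarith
        rw [this, ← ha0] at hyK
        simp only [one_smul, zero_smul, zero_add] at hyK
        exact hx (subset_closure hyK)
      · have hform : a • p + b • x = p + b • u := by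
          rw [hu]; have : a = 1 - b := by linarith
          rw [this]; module
        rw [hform] at hyK
        exact hcon b ⟨hbpos, by linarith⟩ hyK
    obtain ⟨f, c, hfK, hfseg⟩ :=
      geometric_hahn_banach_open hKconv hKopen (convex_segment p x) hdisj
    have hfcl : ∀ y ∈ closure K, f y ≤ c := by
      intro y hy
      have : closure K ⊆ f ⁻¹' Set.Iic c := by
        apply closure_minimal _ (IsClosed.preimage f.continuous isClosed_Iic)
        intro z hz; exact le_of_lt (hfK z hz)
      exact this hy
    have hfp : f p = c :=
      le_antisymm (hfcl p hpcl) (hfseg p (left_mem_segment ℝ p x))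
    -- f ∘ Γ has a global max at sstar
    have hfmax : IsLocalMax (fun s => f (Γ s)) sstar := by
      apply Filter.Eventually.of_forall
      intro s
      have : Γ s ∈ closure K := frontier_subset_closure (hrange ▸ Set.mem_range_self s)
      calc f (Γ s) ≤ c := hfcl _ this
        _ = f p := hfp.symm
    have hfd : HasDerivAt (fun s => f (Γ s)) (f w) sstar :=
      (f.hasFDerivAt.comp_hasDerivAt sstar (hΓd sstar))
    have hfw : f w = 0 := by
      have := hfmax.deriv_eq_zero; rwa [hfd.deriv] at this
    -- Riesz representation
    set v : EuclideanSpace ℝ (Fin 2) := (InnerProductSpace.toDual ℝ _).symm f with hv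
    have hvy : ∀ y, ⟪v, y⟫ = f y := fun y => InnerProductSpace.toDual_symm_apply
    -- v and u both lie in the 1-dimensional orthogonal of w, so v = μ • u
    have hvW : v ∈ (ℝ ∙ w)ᗮ := by
      rw [Submodule.mem_orthogonal_singleton_iff_inner_right]
      have := hvy w
      rw [hfw] at this
      rw [real_inner_comm]; exact this
    have huW : u ∈ (ℝ ∙ w)ᗮ := by
      rw [Submodule.mem_orthogonal_singleton_iff_inner_right]; exact huw
    have hfinW : Module.finrank ℝ ((ℝ ∙ w)ᗮ : Submodule ℝ (EuclideanSpace ℝ (Fin 2))) = 1 := by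
      have h1 : Module.finrank ℝ (ℝ ∙ w : Submodule ℝ (EuclideanSpace ℝ (Fin 2))) = 1 :=
        finrank_span_singleton hw0
      have h2 := Submodule.finrank_add_finrank_orthogonal (K := (ℝ ∙ w :
        Submodule ℝ (EuclideanSpace ℝ (Fin 2))))
      rw [h1, finrank_euclideanSpace_fin] at h2
      omega
    have hspan : (ℝ ∙ u : Submodule ℝ (EuclideanSpace ℝ (Fin 2))) = (ℝ ∙ w)ᗮ := by
      apply Submodule.eq_of_le_of_finrank_eq
      · rw [Submodule.span_singleton_le_iff_mem]; exact huW
      · rw [hfinW]; exact finrank_span_singleton hu0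
    have hvmem : v ∈ (ℝ ∙ u : Submodule ℝ (EuclideanSpace ℝ (Fin 2))) := hspan ▸ hvW
    obtain ⟨μ, hμ⟩ := Submodule.mem_span_singleton.mp hvmem
    -- μ > 0
    have hfu : 0 ≤ f u := by
      have hxseg := hfseg x (right_mem_segment ℝ p x)
      have : f u = f x - f p := by rw [hu, map_sub]
      rw [this, hfp]; linarith
    have huu : (0:ℝ) < ⟪u, u⟫ := by
      rw [real_inner_self_eq_norm_sq]
      exact pow_pos (norm_pos_iff.mpr hu0) 2
    have hμ0 : 0 ≤ μ := by
      have h3 := hvy u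
      rw [← hμ, real_inner_smul_left] at h3
      nlinarith
    have hμpos : 0 < μ := by
      rcases eq_or_lt_of_le hμ0 with h | h
      · exfalso
        obtain ⟨y₀, hy₀⟩ := hKne
        have hv0 : v = 0 := by rw [← hμ, ← h, zero_smul]
        have hf0 : ∀ y, f y = 0 := by intro y; rw [← hvy y, hv0, inner_zero_left]
        have h1 := hfK y₀ hy₀
        rw [hf0 y₀] at h1
        rw [hf0 p] at hfp
        linarith
      · exact h
    -- then p is a global minimizer of dx, contradiction
    have hmin : ∀ s, dx sstar ≤ dx s := by
      intro s
      have hΓcl : Γ s ∈ closure K := frontier_subset_closure (hrange ▸ Set.mem_range_self s)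
      have h1 : f (Γ s) ≤ c := hfcl _ hΓcl
      have h1' : f (Γ s) ≤ f p := by rw [hfp]; exact h1
      have h2 : ⟪u, Γ s - p⟫ ≤ 0 := by
        have h3 := hvy (Γ s - p)
        rw [← hμ, real_inner_smul_left, map_sub] at h3
        nlinarith
      have hexp : ‖x - Γ s‖^2 = ‖u‖^2 - 2 * ⟪u, Γ s - p⟫ + ‖Γ s - p‖^2 := by
        have : x - Γ s = u - (Γ s - p) := by rw [hu]; abel
        rw [this, ← real_inner_self_eq_norm_sq, ← real_inner_self_eq_norm_sq,
          ← real_inner_self_eq_norm_sq]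
        rw [inner_sub_sub_self]
        ring_nf
        rw [real_inner_comm (Γ s - p) u]
        ring
      rw [hdx sstar, hdx s]
      have hne : x - Γ sstar = u := by rw [hu, hp]
      rw [hne]
      have hsqle : ‖u‖^2 ≤ ‖x - Γ s‖^2 := by
        have := sq_nonneg ‖Γ s - p‖
        linarith
      calc ‖u‖ = Real.sqrt (‖u‖^2) := (Real.sqrt_sq (norm_nonneg u)).symm
        _ ≤ Real.sqrt (‖x - Γ s‖^2) := Real.sqrt_le_sqrt hsqle
        _ = ‖x - Γ s‖ := Real.sqrt_sq (norm_nonneg _)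
    have : dx sstar ≤ ⨅ s, dx s := by
      apply le_ciInf hmin
    linarith
  -- conclude using convexity
  obtain ⟨t, ⟨ht0, ht1⟩, hyK⟩ := key
  have hunorm : (0:ℝ) < ‖u‖ := norm_pos_iff.mpr hu0
  refine ⟨t * ‖u‖, by positivity, ?_⟩
  rintro τ ⟨hτ0, hτε⟩
  have hmem : p + (τ / ‖u‖) • u ∈ openSegment ℝ p (p + t • u) := by
    refine ⟨1 - τ / (t * ‖u‖), τ / (t * ‖u‖), ?_, ?_, ?_, ?_⟩
    · have : τ / (t * ‖u‖) < 1 := (div_lt_one (by positivity)).mpr hτε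
      linarith
    · positivity
    · ring
    · have hθ : (τ / (t * ‖u‖)) * t = τ / ‖u‖ := by
        field_simp
      rw [smul_add, smul_smul, hθ]
      module
  have := hKconv.openSegment_closure_interior_subset_interior hpcl
    (by rwa [hKopen.interior_eq]) hmem
  rwa [hKopen.interior_eq] at this
end
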